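/- If the machine M is FTA-compliant with the downgrader architectural specification (DG, C_DG) and π(p) is a non-trivial proposition about C, P, and H activity after the last D action, then for every α ∈ A*, M,π,α ⊨ ¬K_L p. -/
import Mathlib


structure Machine (S A D O : Type) where
  s0 : S
  step : S → A → S
  dom : A → D
  obs : D → S → O

namespace Machine

def run {S A D O : Type} (M : Machine S A D O) (α : List A) : S :=
  α.foldl M.step M.s0

end Machine
/-- Elements of a view: actions or (group) observations. -/
inductive VE (A O' : Type) where
  | act : A → VE A O'
  | obs : O' → VE A O'

open Classical in
/-- Absorptive concatenation: `σ ∘ x` is `σ` if `x` equals the last element of `σ`,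
and `σ ++ [x]` otherwise. -/
noncomputable def absorb {X : Type} (σ : List X) (x : X) : List X :=
  if σ.getLast? = some x then σ else σ ++ [x]

open Classical in
/-- View of a group `G`, computed on the reversed action sequence. -/
noncomputable def viewR {S A D O : Type} (M : Machine S A D O) (G : Set D) :
    List A → List (VE A (G → O))
  | [] => [VE.obs (fun u : G => M.obs u.1 M.s0)]
  | a :: ρ =>
    let o : VE A (G → O) := VE.obs (fun u : G => M.obs u.1 (M.run ((a :: ρ).reverse)))
    if M.dom a ∈ G then viewR M G ρ ++ [VE.act a, o] else absorb (viewR M G ρ) o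

/-- The view of group `G` of the action sequence `α`. -/
noncomputable def view {S A D O : Type} (M : Machine S A D O) (G : Set D) (α : List A) :
    List (VE A (G → O)) :=
  viewR M G α.reverse
/-- Formulas of the epistemic logic (without distributed knowledge). -/
inductive Formula (PC D : Type) where
  | tru : Formula PC D
  | atom : PC → Formula PC D
  | neg : Formula PC D → Formula PC D
  | conj : Formula PC D → Formula PC D → Formula PC D
  | know : Set D → Formula PC D → Formula PC D

/-- Satisfaction relation `M,π,α ⊨ φ`. -/
def sat {S A D O PC : Type} (M : Machine S A D O) (π : PC → Set (List A)) :
    List A → Formula PC D → Prop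
  | _, .tru => True
  | α, .atom p => α ∈ π p
  | α, .neg φ => ¬ sat M π α φ
  | α, .conj φ ψ => sat M π α φ ∧ sat M π α ψ
  | α, .know G φ => ∀ α', view M G α' = view M G α → sat M π α' φ
/-- An extended architecture: `edge u v = none` means no edge, `edge u v = some none`
means an edge labelled `⊤`, and `edge u v = some (some f)` means an edge labelled by
the filter-function name `f`.  There is at most one label per ordered pair by
construction, and the relation is reflexive with label `⊤`. -/
structure ExtArch (D L : Type) where
  edge : D → D → Option (Option L)
  refl : ∀ u, edge u u = some none

/-- Values of the `tf` function and of filter-function interpretations: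
`eps` is the empty value ε, `base v` an arbitrary basic value, and
`pair σ a` the pair `(σ, a)` of a `tf` value and an action. -/
inductive TFVal (A V : Type) where
  | eps : TFVal A V
  | base : V → TFVal A V
  | pair : List (TFVal A V) → A → TFVal A V

/-- `σ ⌢ x`: appends `x` as a single new last element unless `x = ε`. -/
def snoc' {A V : Type} (σ : List (TFVal A V)) : TFVal A V → List (TFVal A V)
  | .eps => σ
  | x => σ ++ [x]

/-- `tf`, computed on the reversed action sequence. -/
def tfR {A D L V : Type} (Arch : ExtArch D L) (dm : A → D)
    (I : L → List A → A → TFVal A V) : List A → D → List (TFVal A V)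
  | [], _ => []
  | a :: ρ, u =>
    match Arch.edge (dm a) u with
    | none => tfR Arch dm I ρ u
    | some none => tfR Arch dm I ρ u ++ [TFVal.pair (tfR Arch dm I ρ (dm a)) a]
    | some (some f) => snoc' (tfR Arch dm I ρ u) (I f ρ.reverse a)

/-- `tf Arch dm I α u` : maximal information domain `u` is permitted to have after `α`. -/
def tf {A D L V : Type} (Arch : ExtArch D L) (dm : A → D)
    (I : L → List A → A → TFVal A V) (α : List A) (u : D) : List (TFVal A V) :=
  tfR Arch dm I α.reverse u

/-- `inF Arch dm I α a u` : the information `in_{dom(a),u}(α, a)` transmitted to `u`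
when action `a` is performed after `α`. -/
def inF {A D L V : Type} (Arch : ExtArch D L) (dm : A → D)
    (I : L → List A → A → TFVal A V) (α : List A) (a : A) (u : D) : TFVal A V :=
  match Arch.edge (dm a) u with
  | none => TFVal.eps
  | some none => TFVal.pair (tf Arch dm I α (dm a)) a
  | some (some f) => I f α a
/-- FTA-compliance of a machine with an interpreted extended architecture
(whose actions, domains and domain function are those of the machine). -/
def FTACompliant {S A D O L V : Type} (M : Machine S A D O) (Arch : ExtArch D L)
    (I : L → List A → A → TFVal A V) : Prop :=
  ∀ (u : D) (α α' : List A), tf Arch M.dom I α u = tf Arch M.dom I α' u →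
    M.obs u (M.run α) = M.obs u (M.run α')
/-- The five domains of the downgrader architecture `DG` (`Dg` is the
downgrader `D`, `Lo` the low-security domain `L`). -/
inductive DGDom where
  | C : DGDom
  | P : DGDom
  | H : DGDom
  | Dg : DGDom
  | Lo : DGDom
deriving DecidableEq

/-- The downgrader extended architecture: reflexive `⊤`-edges, `C ↝_⊤ H`,
`P ↝_⊤ H`, `H ↝_⊤ D` and `D ↝_rel L` (the label set is `Unit`, with `()`
standing for `rel`). -/
def DGArch : ExtArch DGDom Unit where
  edge u v :=
    match u, v with
    | .C, .C => some none
    | .P, .P => some none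
    | .H, .H => some none
    | .Dg, .Dg => some none
    | .Lo, .Lo => some none
    | .C, .H => some none
    | .P, .H => some none
    | .H, .Dg => some none
    | .Dg, .Lo => some (some ())
    | _, _ => none
  refl u := by cases u <;> rfl

/-- The policy `↝′`: `(u,v,f) ∈ ↝′` iff `f = ⊤` and either `u = v = C` or
there is an edge `(u,v,g)` in `DG` with `{u,v} ⊆ {P,H,D,L}`. -/
def DGArch' : ExtArch DGDom Unit where
  edge u v :=
    if (u = DGDom.C ∧ v = DGDom.C) ∨
        ((DGArch.edge u v).isSome = true ∧ u ≠ DGDom.C ∧ v ≠ DGDom.C)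
    then some none else none
  refl u := by cases u <;> decide

/-- Membership in the downgrader architectural specification `C_DG`: the
filter function `rel` transmits `(tf_D^{↝′}(α), a)`. -/
def memCDG {A V : Type} (dm : A → DGDom) (I : Unit → List A → A → TFVal A V) :
    Prop :=
  ∀ (α : List A) (a : A), dm a = DGDom.Dg →
    I () α a = TFVal.pair (tf DGArch' dm I α DGDom.Dg) a

/-- `F(α)`: the `C`, `P` and `H` actions of `α` occurring after the last `D`
action. -/
def Fafter {A : Type} (dm : A → DGDom) (α : List A) : List A :=
  α.foldl (fun acc a =>
    if dm a = DGDom.Dg then []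
    else if dm a = DGDom.C ∨ dm a = DGDom.P ∨ dm a = DGDom.H then acc ++ [a]
    else acc) []

/-- A proposition about `C`, `P` and `H` activity after the last `D` action. -/
def AboutAfterLastD {A : Type} (dm : A → DGDom) (X : Set (List A)) : Prop :=
  ∃ Y : Set (List A), ∀ α : List A, α ∈ X ↔ Fafter dm α ∈ Y

section Aux

variable {S A D O L V : Type}

lemma absorb_getLast? {X : Type} (σ : List X) (x : X) :
    (absorb σ x).getLast? = some x := by
  unfold absorb
  split
  · assumption
  · simp

lemma viewR_getLast? (M : Machine S A D O) (G : Set D) (ρ : List A) :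
    (viewR M G ρ).getLast? = some (VE.obs (fun u : G => M.obs u.1 (M.run ρ.reverse))) := by
  cases ρ with
  | nil => simp [viewR, Machine.run]
  | cons a ρ =>
    rw [viewR]
    split
    · rw [show viewR M G ρ ++ [VE.act a, VE.obs fun u : G => M.obs u.1 (M.run (a :: ρ).reverse)]
        = (viewR M G ρ ++ [VE.act a]) ++ [VE.obs fun u : G => M.obs u.1 (M.run (a :: ρ).reverse)]
        by simp]
      simp
    · exact absorb_getLast? _ _

lemma view_snoc_not_mem (M : Machine S A D O) (G : Set D) (α : List A) (a : A)
    (h : M.dom a ∉ G)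
    (hobs : ∀ u : G, M.obs u.1 (M.run (α ++ [a])) = M.obs u.1 (M.run α)) :
    view M G (α ++ [a]) = view M G α := by
  unfold view
  rw [List.reverse_append, List.reverse_singleton, List.singleton_append, viewR]
  rw [if_neg h]
  have ho : (fun u : G => M.obs u.1 (M.run (a :: α.reverse).reverse))
      = (fun u : G => M.obs u.1 (M.run α.reverse.reverse)) := by
    funext u
    have hrev : (a :: α.reverse).reverse = α ++ [a] := by simp
    rw [hrev, hobs u]
    simp
  rw [ho]
  unfold absorb
  rw [if_pos]
  rw [viewR_getLast?]

lemma view_snoc_mem (M : Machine S A D O) (G : Set D) (α : List A) (a : A)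
    (h : M.dom a ∈ G) :
    view M G (α ++ [a]) = view M G α ++
      [VE.act a, VE.obs (fun u : G => M.obs u.1 (M.run (α ++ [a])))] := by
  unfold view
  rw [List.reverse_append, List.reverse_singleton, List.singleton_append, viewR]
  rw [if_pos h]
  congr 3
  simp

lemma tf_snoc (Arch : ExtArch D L) (dm : A → D) (I : L → List A → A → TFVal A V)
    (α : List A) (a : A) (u : D) :
    tf Arch dm I (α ++ [a]) u =
      match Arch.edge (dm a) u with
      | none => tf Arch dm I α u
      | some none => tf Arch dm I α u ++ [TFVal.pair (tf Arch dm I α (dm a)) a]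
      | some (some f) => snoc' (tf Arch dm I α u) (I f α.reverse.reverse a) := by
  unfold tf
  rw [List.reverse_append, List.reverse_singleton, List.singleton_append, tfR]

lemma tf_snoc_none (Arch : ExtArch D L) (dm : A → D) (I : L → List A → A → TFVal A V)
    (α : List A) (a : A) (u : D) (h : Arch.edge (dm a) u = none) :
    tf Arch dm I (α ++ [a]) u = tf Arch dm I α u := by
  rw [tf_snoc, h]

lemma tf_snoc_top (Arch : ExtArch D L) (dm : A → D) (I : L → List A → A → TFVal A V)
    (α : List A) (a : A) (u : D) (h : Arch.edge (dm a) u = some none) :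
    tf Arch dm I (α ++ [a]) u
      = tf Arch dm I α u ++ [TFVal.pair (tf Arch dm I α (dm a)) a] := by
  rw [tf_snoc, h]

lemma Fafter_snoc (dm : A → DGDom) (α : List A) (a : A) :
    Fafter dm (α ++ [a]) =
      if dm a = DGDom.Dg then []
      else if dm a = DGDom.C ∨ dm a = DGDom.P ∨ dm a = DGDom.H then Fafter dm α ++ [a]
      else Fafter dm α := by
  unfold Fafter
  rw [List.foldl_append]
  rfl

end Aux

section Main

variable {S A O V : Type}

/-- `a` is a `C`, `P` or `H` action. -/
def CPH {A : Type} (dm : A → DGDom) (a : A) : Prop :=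
  dm a = DGDom.C ∨ dm a = DGDom.P ∨ dm a = DGDom.H

lemma edge_CPH_Lo {A : Type} {dm : A → DGDom} {a : A} (h : CPH dm a) :
    DGArch.edge (dm a) DGDom.Lo = none := by
  rcases h with h | h | h <;> rw [h] <;> rfl

lemma CPH_not_Dg {A : Type} {dm : A → DGDom} {a : A} (h : CPH dm a) :
    ¬ dm a = DGDom.Dg := by
  rcases h with h | h | h <;> rw [h] <;> decide

lemma CPH_not_mem_Lo {A : Type} {dm : A → DGDom} {a : A} (h : CPH dm a) :
    dm a ∉ ({DGDom.Lo} : Set DGDom) := by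
  rcases h with h | h | h <;> rw [h] <;> simp

/-- Appending a block of `C`,`P`,`H` actions changes neither the `Lo`-view
nor `tf` at `Lo`, and appends to `Fafter`. -/
lemma cph_ext (M : Machine S A DGDom O) (I : Unit → List A → A → TFVal A V)
    (hFTA : FTACompliant M DGArch I) (χ δ : List A) (hδ : ∀ a ∈ δ, CPH M.dom a) :
    view M {DGDom.Lo} (χ ++ δ) = view M {DGDom.Lo} χ ∧
    tf DGArch M.dom I (χ ++ δ) DGDom.Lo = tf DGArch M.dom I χ DGDom.Lo ∧
    Fafter M.dom (χ ++ δ) = Fafter M.dom χ ++ δ := by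
  induction δ using List.reverseRecOn with
  | nil => simp
  | append_singleton δ a ih =>
    have hδ' : ∀ b ∈ δ, CPH M.dom b := fun b hb => hδ b (by simp [hb])
    have ha : CPH M.dom a := hδ a (by simp)
    obtain ⟨ihv, iht, ihf⟩ := ih hδ'
    have hassoc : χ ++ (δ ++ [a]) = (χ ++ δ) ++ [a] := by simp
    have htf : tf DGArch M.dom I ((χ ++ δ) ++ [a]) DGDom.Lo
        = tf DGArch M.dom I (χ ++ δ) DGDom.Lo :=
      tf_snoc_none _ _ _ _ _ _ (edge_CPH_Lo ha)
    have hobs : ∀ u : ({DGDom.Lo} : Set DGDom),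
        M.obs u.1 (M.run ((χ ++ δ) ++ [a])) = M.obs u.1 (M.run (χ ++ δ)) := by
      intro u
      have hu : u.1 = DGDom.Lo := u.2
      refine hFTA u.1 _ _ ?_
      rw [hu, htf]
    refine ⟨?_, ?_, ?_⟩
    · rw [hassoc, view_snoc_not_mem M _ _ _ (CPH_not_mem_Lo ha) hobs, ihv]
    · rw [hassoc, htf, iht]
    · rw [hassoc, Fafter_snoc, if_neg (CPH_not_Dg ha),
          if_pos (show M.dom a = DGDom.C ∨ M.dom a = DGDom.P ∨ M.dom a = DGDom.H from ha),
          ihf, List.append_assoc]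

/-- Key construction: for any `α` there is `α\'` with the same `Lo`-view and the
same `tf` at `Lo`, whose `C`,`P`,`H` activity after the last `D` action is `δ`. -/
lemma key (M : Machine S A DGDom O) (I : Unit → List A → A → TFVal A V)
    (hFTA : FTACompliant M DGArch I) (δ : List A) (hδ : ∀ a ∈ δ, CPH M.dom a) :
    ∀ α : List A, ∃ α' : List A,
      view M {DGDom.Lo} α' = view M {DGDom.Lo} α ∧
      tf DGArch M.dom I α' DGDom.Lo = tf DGArch M.dom I α DGDom.Lo ∧
      Fafter M.dom α' = δ := by
  intro α
  induction α using List.reverseRecOn with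
  | nil =>
    obtain ⟨h1, h2, h3⟩ := cph_ext M I hFTA [] δ hδ
    exact ⟨δ, by simpa using h1, by simpa using h2, by simpa [Fafter] using h3⟩
  | append_singleton α a ih =>
    obtain ⟨α', hv, ht, hf⟩ := ih
    by_cases hcph : CPH M.dom a
    · -- C, P or H action: reuse α'
      have htf : tf DGArch M.dom I (α ++ [a]) DGDom.Lo = tf DGArch M.dom I α DGDom.Lo :=
        tf_snoc_none _ _ _ _ _ _ (edge_CPH_Lo hcph)
      refine ⟨α', ?_, by rw [ht, htf], hf⟩
      rw [view_snoc_not_mem M _ _ _ (CPH_not_mem_Lo hcph) ?_, hv]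
      intro u
      have hu : u.1 = DGDom.Lo := u.2
      refine hFTA u.1 _ _ ?_
      rw [hu, htf]
    · rcases hDg : M.dom a with _ | _ | _ | _ | _
      · exact absurd (Or.inl hDg) hcph
      · exact absurd (Or.inr (Or.inl hDg)) hcph
      · exact absurd (Or.inr (Or.inr hDg)) hcph
      ·
        obtain ⟨hv', ht', hf'⟩ := cph_ext M I hFTA (α ++ [a]) δ hδ
        refine ⟨(α ++ [a]) ++ δ, hv', ht', ?_⟩
        rw [hf', Fafter_snoc, if_pos hDg]
        simp
      · have hedge : DGArch.edge (M.dom a) DGDom.Lo = some none := by rw [hDg]; rfl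
        have htf : tf DGArch M.dom I (α' ++ [a]) DGDom.Lo
            = tf DGArch M.dom I (α ++ [a]) DGDom.Lo := by
          rw [tf_snoc_top _ _ _ _ _ _ hedge, tf_snoc_top _ _ _ _ _ _ hedge, hDg, ht]
        have hmem : M.dom a ∈ ({DGDom.Lo} : Set DGDom) := by rw [hDg]; rfl
        refine ⟨α' ++ [a], ?_, htf, ?_⟩
        · rw [view_snoc_mem M _ _ _ hmem, view_snoc_mem M _ _ _ hmem, hv]
          congr 3
          refine congrArg VE.obs (funext fun u => ?_)
          have hu : u.1 = DGDom.Lo := u.2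
          refine hFTA u.1 _ _ ?_
          rw [hu, htf]
        · rw [Fafter_snoc, if_neg (by rw [hDg]; decide),
              if_neg (by rw [hDg]; decide), hf]

lemma Fafter_CPH {A : Type} (dm : A → DGDom) (α : List A) :
    ∀ a ∈ Fafter dm α, CPH dm a := by
  induction α using List.reverseRecOn with
  | nil => intro a ha; simp [Fafter] at ha
  | append_singleton α b ih =>
    rw [Fafter_snoc]
    split
    · intro a ha; simp at ha
    · split
      · intro a ha
        rcases List.mem_append.1 ha with h | h
        · exact ih a h
        · simp at h; subst h; assumption
      · exact ih

end Main

/-- if `M` is FTA-compliant with `(DG, C_DG)` and `π(p)` is a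
non-trivial proposition about `C`, `P` and `H` activity after the last `D`
action, then `M,π,α ⊨ ¬K_L p` for every `α`. -/
theorem statement11 {S A O V PC : Type} (M : Machine S A DGDom O)
    (I : Unit → List A → A → TFVal A V) (hI : memCDG M.dom I)
    (hFTA : FTACompliant M DGArch I)
    (π : PC → Set (List A)) (p : PC)
    (habout : AboutAfterLastD M.dom (π p))
    (hne : π p ≠ (∅ : Set (List A))) (hnuniv : π p ≠ (Set.univ : Set (List A))) :
    ∀ α : List A,
      sat M π α (Formula.neg (Formula.know {DGDom.Lo} (Formula.atom p))) := by
  intro α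
  -- there is a trace not in π p
  have : ∃ α₀, α₀ ∉ π p := by
    by_contra h
    push_neg at h
    exact hnuniv (Set.eq_univ_of_forall h)
  obtain ⟨α₀, hα₀⟩ := this
  obtain ⟨Y, hY⟩ := habout
  obtain ⟨α', hv, -, hf⟩ := key M I hFTA (Fafter M.dom α₀) (Fafter_CPH M.dom α₀) α
  show ¬ _
  intro hk
  have hmem : α' ∈ π p := hk α' hv
  exact hα₀ ((hY α₀).2 (by rw [← hf]; exact (hY α').1 hmem))
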